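/- Zig-zag homotopy equivalence: given a short exact sequence of complexes 0 → C'' →^{r'} C' →^{r} C → 0 with exact middle term, a homotopy h' on C' with (h')² = 0 and h'd' + d'h' = 1, and splittings ℓ' : C' → C'', ℓ : C → C' satisfying r'ℓ' + ℓr = 1, rℓ = 1, ℓ'r' = 1, the maps R = r h' r' and L = ℓ' d' ℓ are chain maps (up to a sign/degree shift by one: L d = -d'' L and R d'' = -d R) and form a homotopy equivalence between C'' and C with homotopies r h' ℓ on C and ℓ' h' r' on C''. -/

import Mathlib

/-- zig-zag lemma with homotopy equivalence: given a short
exact sequence of complexes `0 → C'' →^{r'} C' →^{r} C → 0` (degreewise: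
`r'` injective, `r` surjective, `range r' = ker r`, both chain maps), a
contracting homotopy `h'` for the exact middle term (`h'² = 0`,
`h' d' + d' h' = 1`), and splittings `ℓ' : C' → C''`, `ℓ : C → C'` with
`r' ℓ' + ℓ r = 1`, `r ℓ = 1`, `ℓ' r' = 1`, the maps `R = r h' r'` and
`L = ℓ' d' ℓ` are chain maps up to the sign coming from the degree shift
(`L d = -d'' L`, `R d'' = -d R`) and form a homotopy equivalence between `C''`
and `C`, with homotopies `r h' ℓ` on `C` and `ℓ' h' r'` on `C''`. -/
theorem stmt_19 {Rng : Type*} [CommRing Rng] {C C' C'' : Type*}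
    [AddCommGroup C] [Module Rng C] [AddCommGroup C'] [Module Rng C']
    [AddCommGroup C''] [Module Rng C'']
    (d : Module.End Rng C) (d' : Module.End Rng C') (d'' : Module.End Rng C'')
    (hd2 : d * d = 0) (hd'2 : d' * d' = 0) (hd''2 : d'' * d'' = 0)
    (r' : C'' →ₗ[Rng] C') (r : C' →ₗ[Rng] C)
    (hr'chain : d' ∘ₗ r' = r' ∘ₗ d'') (hrchain : d ∘ₗ r = r ∘ₗ d')
    (hinj : Function.Injective r') (hsurj : Function.Surjective r)
    (hexact : LinearMap.range r' = LinearMap.ker r)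
    (h' : Module.End Rng C')
    (hh'2 : h' * h' = 0) (hcontract : h' * d' + d' * h' = 1)
    (l' : C' →ₗ[Rng] C'') (l : C →ₗ[Rng] C')
    (hsplit : r' ∘ₗ l' + l ∘ₗ r = LinearMap.id)
    (hrl : r ∘ₗ l = LinearMap.id) (hl'r' : l' ∘ₗ r' = LinearMap.id) :
    ((l' ∘ₗ d' ∘ₗ l) ∘ₗ d = -(d'' ∘ₗ (l' ∘ₗ d' ∘ₗ l))) ∧
    ((r ∘ₗ h' ∘ₗ r') ∘ₗ d'' = -(d ∘ₗ (r ∘ₗ h' ∘ₗ r'))) ∧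
    ((r ∘ₗ h' ∘ₗ r') ∘ₗ (l' ∘ₗ d' ∘ₗ l)
        = LinearMap.id - d ∘ₗ (r ∘ₗ h' ∘ₗ l) - (r ∘ₗ h' ∘ₗ l) ∘ₗ d) ∧
    ((l' ∘ₗ d' ∘ₗ l) ∘ₗ (r ∘ₗ h' ∘ₗ r')
        = LinearMap.id - d'' ∘ₗ (l' ∘ₗ h' ∘ₗ r') - (l' ∘ₗ h' ∘ₗ r') ∘ₗ d'') := by
  -- pointwise helper facts
  have hrr'0 : ∀ z : C'', r (r' z) = 0 := fun z => by
    have : r' z ∈ LinearMap.ker r := hexact ▸ LinearMap.mem_range_self r' z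
    exact this
  have hcon : ∀ y : C', h' (d' y) + d' (h' y) = y := fun y => by
    have := congrFun (congrArg DFunLike.coe hcontract) y
    simpa [Module.End.mul_apply] using this
  have hsp : ∀ y : C', r' (l' y) + l (r y) = y := fun y => by
    have := congrFun (congrArg DFunLike.coe hsplit) y
    simpa using this
  have hrl0 : ∀ x : C, r (l x) = x := fun x => by
    have := congrFun (congrArg DFunLike.coe hrl) x
    simpa using this
  have hl'r'0 : ∀ z : C'', l' (r' z) = z := fun z => by
    have := congrFun (congrArg DFunLike.coe hl'r') z
    simpa using this
  have hr'ch : ∀ z : C'', d' (r' z) = r' (d'' z) := fun z => by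
    have := congrFun (congrArg DFunLike.coe hr'chain) z
    simpa using this
  have hrch : ∀ y : C', d (r y) = r (d' y) := fun y => by
    have := congrFun (congrArg DFunLike.coe hrchain) y
    simpa using this
  have hd'20 : ∀ y : C', d' (d' y) = 0 := fun y => by
    have := congrFun (congrArg DFunLike.coe hd'2) y
    simpa [Module.End.mul_apply] using this
  have hl'l : ∀ x : C, l' (l x) = 0 := fun x => by
    apply hinj
    have h1 := hsp (l x)
    rw [hrl0, add_eq_right] at h1
    rw [h1, map_zero]
  have hld : ∀ x : C, l (d x) = d' (l x) - r' (l' (d' (l x))) := fun x => by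
    set y := l (d x) - d' (l x) with hy
    have hry : r y = 0 := by
      simp only [hy, map_sub, hrl0]
      rw [← hrch, hrl0, sub_self]
    have h1 := hsp y
    rw [hry, map_zero, add_zero] at h1
    have h2 : l' y = - l' (d' (l x)) := by
      simp only [hy, map_sub, hl'l, zero_sub]
    rw [h2, map_neg] at h1
    have h3 : l (d x) - d' (l x) = -r' (l' (d' (l x))) := h1.symm
    rw [sub_eq_iff_eq_add] at h3
    rw [h3]; abel
  refine ⟨?_, ?_, ?_, ?_⟩
  · ext x
    simp only [LinearMap.comp_apply, LinearMap.neg_apply]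
    rw [hld x]
    simp only [map_sub, hd'20, map_zero, zero_sub]
    rw [hr'ch, map_neg, hl'r'0]
  · ext x
    simp only [LinearMap.comp_apply, LinearMap.neg_apply]
    have h1 : h' (r' (d'' x)) = r' x - d' (h' (r' x)) := by
      rw [← hr'ch]; exact eq_sub_of_add_eq (hcon (r' x))
    rw [h1]
    simp only [map_sub, hrr'0, zero_sub, ← hrch]
  · ext x
    simp only [LinearMap.comp_apply, LinearMap.sub_apply, LinearMap.id_apply]
    have h0 := hld x
    rw [eq_sub_iff_add_eq] at h0
    have h1 : r' (l' (d' (l x))) = d' (l x) - l (d x) := by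
      rw [eq_sub_iff_add_eq, add_comm]; exact h0
    rw [h1]
    simp only [map_sub]
    have h2 : h' (d' (l x)) = l x - d' (h' (l x)) := eq_sub_of_add_eq (hcon (l x))
    rw [h2]
    simp only [map_sub, hrl0, ← hrch]
  · ext x
    simp only [LinearMap.comp_apply, LinearMap.sub_apply, LinearMap.id_apply]
    have h1 : l (r (h' (r' x))) = h' (r' x) - r' (l' (h' (r' x))) :=
      eq_sub_of_add_eq' (hsp (h' (r' x)))
    rw [h1]
    simp only [map_sub]
    rw [hr'ch, hl'r'0]
    have h2 : d' (h' (r' x)) = r' x - h' (r' (d'' x)) := by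
      rw [← hr'ch]; exact eq_sub_of_add_eq' (hcon (r' x))
    rw [h2]
    simp only [map_sub, hl'r'0]
    abel
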